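/- Let (S, μ) be a measure space with μ σ-finite, let p₀, p₁ : S → ℝ be nonnegative measurable probability densities with respect to μ, let π₀, π₁ ≥ 0 with π₀ + π₁ = 1, let P_e = ∫_S min(π₀ p₀(s), π₁ p₁(s)) dμ(s) and ρ = ∫_S √(p₀(s) p₁(s)) dμ(s). Then P_e ≥ 1/2 − (1/2)·√(1 − 4 π₀ π₁ ρ²). -/

import Mathlib

open MeasureTheory

/-- With Bayes error `P_e = ∫ min (π₀ p₀) (π₁ p₁) dμ` and Bhattacharyya
coefficient `ρ = ∫ √(p₀ p₁) dμ`, one has `P_e ≥ 1/2 − (1/2) √(1 − 4 π₀ π₁ ρ²)`. -/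
theorem bayes_error_ge_half_sub_half_sqrt
    {S : Type*} [MeasurableSpace S] (μ : Measure S) [SigmaFinite μ]
    (p₀ p₁ : S → ℝ) (hp₀m : Measurable p₀) (hp₁m : Measurable p₁)
    (hp₀ : ∀ s, 0 ≤ p₀ s) (hp₁ : ∀ s, 0 ≤ p₁ s)
    (hint₀ : ∫ s, p₀ s ∂μ = 1) (hint₁ : ∫ s, p₁ s ∂μ = 1)
    (π₀ π₁ : ℝ) (hπ₀ : 0 ≤ π₀) (hπ₁ : 0 ≤ π₁) (hπ : π₀ + π₁ = 1)
    (Pe ρ : ℝ) (hPe : Pe = ∫ s, min (π₀ * p₀ s) (π₁ * p₁ s) ∂μ)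
    (hρ : ρ = ∫ s, Real.sqrt (p₀ s * p₁ s) ∂μ) :
    1 / 2 - 1 / 2 * Real.sqrt (1 - 4 * π₀ * π₁ * ρ ^ 2) ≤ Pe := by
  -- integrability of the densities
  have hip₀ : Integrable p₀ μ := by
    by_contra h
    rw [integral_undef h] at hint₀; norm_num at hint₀
  have hip₁ : Integrable p₁ μ := by
    by_contra h
    rw [integral_undef h] at hint₁; norm_num at hint₁
  set f : S → ℝ := fun s => min (π₀ * p₀ s) (π₁ * p₁ s) with hf
  set g : S → ℝ := fun s => max (π₀ * p₀ s) (π₁ * p₁ s) with hg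
  have hfnn : ∀ s, 0 ≤ f s := fun s =>
    le_min (mul_nonneg hπ₀ (hp₀ s)) (mul_nonneg hπ₁ (hp₁ s))
  have hgnn : ∀ s, 0 ≤ g s := fun s => le_trans (hfnn s) (min_le_max)
  have hfm : Measurable f := (hp₀m.const_mul π₀).min (hp₁m.const_mul π₁)
  have hgm : Measurable g := (hp₀m.const_mul π₀).max (hp₁m.const_mul π₁)
  have hsum : Integrable (fun s => π₀ * p₀ s + π₁ * p₁ s) μ :=
    (hip₀.const_mul π₀).add (hip₁.const_mul π₁)
  have hif : Integrable f μ := by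
    refine hsum.mono (hfm.aestronglyMeasurable) (Filter.Eventually.of_forall fun s => ?_)
    rw [Real.norm_of_nonneg (hfnn s), Real.norm_of_nonneg
      (add_nonneg (mul_nonneg hπ₀ (hp₀ s)) (mul_nonneg hπ₁ (hp₁ s)))]
    exact le_add_of_le_of_nonneg (min_le_left _ _) (mul_nonneg hπ₁ (hp₁ s))
  have hig : Integrable g μ := by
    refine hsum.mono (hgm.aestronglyMeasurable) (Filter.Eventually.of_forall fun s => ?_)
    rw [Real.norm_of_nonneg (hgnn s), Real.norm_of_nonneg
      (add_nonneg (mul_nonneg hπ₀ (hp₀ s)) (mul_nonneg hπ₁ (hp₁ s)))]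
    exact max_le (le_add_of_le_of_nonneg le_rfl (mul_nonneg hπ₁ (hp₁ s)))
      (le_add_of_nonneg_of_le (mul_nonneg hπ₀ (hp₀ s)) le_rfl)
  -- ∫ f = Pe, ∫ g = 1 - Pe
  have hPe' : ∫ s, f s ∂μ = Pe := hPe.symm
  have hsum_int : ∫ s, (f s + g s) ∂μ = 1 := by
    have : ∀ s, f s + g s = π₀ * p₀ s + π₁ * p₁ s := fun s => min_add_max _ _
    rw [integral_congr_ae (Filter.Eventually.of_forall this), integral_add
      (hip₀.const_mul π₀) (hip₁.const_mul π₁), integral_const_mul, integral_const_mul,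
      hint₀, hint₁, mul_one, mul_one, hπ]
  have hg_int : ∫ s, g s ∂μ = 1 - Pe := by
    rw [integral_add hif hig, hPe'] at hsum_int
    linarith
  have hPe_nonneg : 0 ≤ Pe := by
    rw [hPe]
    exact integral_nonneg hfnn
  -- Cauchy-Schwarz: ∫ √f √g ≤ (∫ f)^(1/2) (∫ g)^(1/2)
  have h2 : (2 : ℝ).HolderConjugate 2 := by constructor <;> norm_num
  have hsf : MemLp (fun s => Real.sqrt (f s)) (ENNReal.ofReal 2) μ := by
    have : ENNReal.ofReal (2 : ℝ) = 2 := by norm_num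
    rw [this, memLp_two_iff_integrable_sq
      (hfm.sqrt.aestronglyMeasurable)]
    refine hif.congr (Filter.Eventually.of_forall fun s => ?_)
    show f s = Real.sqrt (f s) ^ 2
    rw [Real.sq_sqrt (hfnn s)]
  have hsg : MemLp (fun s => Real.sqrt (g s)) (ENNReal.ofReal 2) μ := by
    have : ENNReal.ofReal (2 : ℝ) = 2 := by norm_num
    rw [this, memLp_two_iff_integrable_sq
      (hgm.sqrt.aestronglyMeasurable)]
    refine hig.congr (Filter.Eventually.of_forall fun s => ?_)
    show g s = Real.sqrt (g s) ^ 2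
    rw [Real.sq_sqrt (hgnn s)]
  have hCS := integral_mul_le_Lp_mul_Lq_of_nonneg h2
    (Filter.Eventually.of_forall fun s => Real.sqrt_nonneg (f s))
    (Filter.Eventually.of_forall fun s => Real.sqrt_nonneg (g s)) hsf hsg
  -- simplify both sides of Cauchy–Schwarz
  have hlhs : ∫ s, Real.sqrt (f s) * Real.sqrt (g s) ∂μ
      = Real.sqrt (π₀ * π₁) * ρ := by
    rw [hρ, ← integral_const_mul]
    refine integral_congr_ae (Filter.Eventually.of_forall fun s => ?_)
    show Real.sqrt (f s) * Real.sqrt (g s) = Real.sqrt (π₀ * π₁) * Real.sqrt (p₀ s * p₁ s)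
    rw [← Real.sqrt_mul (hfnn s), min_mul_max, ← Real.sqrt_mul (mul_nonneg hπ₀ hπ₁)]
    ring_nf
  have hfsq : ∫ s, Real.sqrt (f s) ^ (2:ℝ) ∂μ = Pe := by
    rw [← hPe']
    refine integral_congr_ae (Filter.Eventually.of_forall fun s => ?_)
    show Real.sqrt (f s) ^ (2:ℝ) = f s
    rw [Real.rpow_two, Real.sq_sqrt (hfnn s)]
  have hgsq : ∫ s, Real.sqrt (g s) ^ (2:ℝ) ∂μ = 1 - Pe := by
    rw [← hg_int]
    refine integral_congr_ae (Filter.Eventually.of_forall fun s => ?_)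
    show Real.sqrt (g s) ^ (2:ℝ) = g s
    rw [Real.rpow_two, Real.sq_sqrt (hgnn s)]
  rw [hlhs, hfsq, hgsq] at hCS
  -- from Cauchy–Schwarz derive π₀ π₁ ρ² ≤ Pe (1 - Pe)
  have hρnn : 0 ≤ ρ := by
    rw [hρ]; exact integral_nonneg fun s => Real.sqrt_nonneg _
  have hPe1 : Pe ≤ 1 := by
    have h0 : 0 ≤ ∫ s, g s ∂μ := integral_nonneg hgnn
    rw [hg_int] at h0; linarith
  rw [show (1:ℝ)/2 = ((1:ℝ)/2 : ℝ) from rfl, ← Real.sqrt_eq_rpow, ← Real.sqrt_eq_rpow] at hCS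
  have hkey : π₀ * π₁ * ρ ^ 2 ≤ Pe * (1 - Pe) := by
    have hsq := mul_self_le_mul_self (mul_nonneg (Real.sqrt_nonneg (π₀ * π₁)) hρnn) hCS
    nlinarith [Real.sq_sqrt (mul_nonneg hπ₀ hπ₁), Real.sq_sqrt hPe_nonneg,
      Real.sq_sqrt (by linarith : (0:ℝ) ≤ 1 - Pe), Real.sqrt_nonneg (π₀ * π₁),
      Real.sqrt_nonneg Pe, Real.sqrt_nonneg (1 - Pe)]
  set t := Real.sqrt (1 - 4 * π₀ * π₁ * ρ ^ 2) with ht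
  have htnn : 0 ≤ t := Real.sqrt_nonneg _
  have ht2 : t ^ 2 = 1 - 4 * π₀ * π₁ * ρ ^ 2 := by
    apply Real.sq_sqrt
    nlinarith [sq_nonneg (1 - 2 * Pe)]
  nlinarith [sq_nonneg (t + (1 - 2 * Pe)), sq_nonneg (t - (1 - 2 * Pe))]
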